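/- Curvature is index expectation: let G=(V,E) be a finite simple graph with |V| = n vertices and let x ∈ V. Averaging the index i_σ(x) uniformly over all n! bijections σ : V → {1, …, n} (each bijection viewed as an injective real-valued function on V) yields the curvature: (1/n!) Σ_{σ} i_σ(x) = K(x). -/

import Mathlib

open Classical Finset

/-- The Euler characteristic of a finite simple graph:
`χ(G) = Σ_{k≥1} (−1)^{k+1} v_k(G)`, where `v_k` counts cliques with `k` vertices. -/
noncomputable def eulerChar {V : Type*} [Fintype V] (G : SimpleGraph V) : ℤ :=
  ∑ s ∈ Finset.univ.powerset.filter
      (fun s : Finset V => s.Nonempty ∧ G.IsClique (s : Set V)),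
    (-1 : ℤ) ^ (s.card + 1)

/-- The Poincaré–Hopf index of an injective function `f` at a vertex `x`:
`i_f(x) = 1 − χ(S_f^−(x))`. -/
noncomputable def fIndex {V : Type*} [Fintype V] (G : SimpleGraph V) (f : V → ℝ) (x : V) : ℤ :=
  1 - eulerChar (G.induce {y | G.Adj x y ∧ f y < f x})

/-- The Euler curvature of `G` at a vertex `x`:
`K(x) = Σ_{c clique, x ∈ c} (−1)^{|c|+1}/|c|`. -/
noncomputable def curvature {V : Type*} [Fintype V] (G : SimpleGraph V) (x : V) : ℚ :=
  ∑ s ∈ Finset.univ.powerset.filter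
      (fun s : Finset V => x ∈ s ∧ G.IsClique (s : Set V)),
    (-1 : ℚ) ^ (s.card + 1) / (s.card : ℚ)

lemma eulerChar_induce {V : Type*} [Fintype V] (G : SimpleGraph V) (S : Set V) [Fintype S] :
    eulerChar (G.induce S) = ∑ c ∈ Finset.univ.powerset.filter
      (fun c : Finset V => c.Nonempty ∧ ↑c ⊆ S ∧ G.IsClique (c : Set V)),
      (-1 : ℤ) ^ (c.card + 1) := by
  unfold eulerChar
  refine Finset.sum_nbij' (i := fun s => s.map (Function.Embedding.subtype _))
    (j := fun c => c.subtype (· ∈ S)) ?_ ?_ ?_ ?_ ?_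
  · intro s hs
    simp only [mem_filter, mem_powerset] at hs ⊢
    obtain ⟨-, hne, hcl⟩ := hs
    refine ⟨subset_univ _, hne.map, ?_, ?_⟩
    · intro y hy
      simp only [coe_map, Set.mem_image, Function.Embedding.coe_subtype] at hy
      obtain ⟨a, _, rfl⟩ := hy
      exact a.2
    · intro a ha b hb hab
      simp only [coe_map, Set.mem_image, Function.Embedding.coe_subtype] at ha hb
      obtain ⟨a', ha', rfl⟩ := ha
      obtain ⟨b', hb', rfl⟩ := hb
      have := hcl ha' hb' (fun h => hab (by rw [h]))
      simpa using this
  · intro c hc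
    simp only [mem_filter, mem_powerset] at hc ⊢
    obtain ⟨-, hne, hsub, hcl⟩ := hc
    refine ⟨subset_univ _, ?_, ?_⟩
    · obtain ⟨y, hy⟩ := hne
      exact ⟨⟨y, hsub hy⟩, by simp [Finset.mem_subtype, hy]⟩
    · intro a ha b hb hab
      simp only [Finset.mem_coe, Finset.mem_subtype] at ha hb
      have := hcl ha hb (fun h => hab (Subtype.ext h))
      simpa using this
  · intro s hs
    ext a
    simp [Finset.mem_subtype]
  · intro c hc
    simp only [mem_filter, mem_powerset] at hc
    exact Finset.subtype_map_of_mem (fun y hy => hc.2.2.1 hy)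
  · intro s hs
    simp

lemma fIndex_eq {V : Type*} [Fintype V] (G : SimpleGraph V) (f : V → ℝ) (x : V) :
    fIndex G f x = ∑ d ∈ Finset.univ.powerset.filter
      (fun d : Finset V => (x ∈ d ∧ G.IsClique (d : Set V)) ∧ ∀ y ∈ d, y ≠ x → f y < f x),
      (-1 : ℤ) ^ (d.card + 1) := by
  set S : Set V := {y | G.Adj x y ∧ f y < f x} with hS
  have hxS : x ∉ S := fun h => G.irrefl h.1
  set C' : Finset (Finset V) := Finset.univ.powerset.filter
      (fun c : Finset V => ↑c ⊆ S ∧ G.IsClique (c : Set V)) with hC'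
  have key : ∑ d ∈ Finset.univ.powerset.filter
      (fun d : Finset V => (x ∈ d ∧ G.IsClique (d : Set V)) ∧ ∀ y ∈ d, y ≠ x → f y < f x),
      (-1 : ℤ) ^ (d.card + 1) = ∑ c ∈ C', (-1 : ℤ) ^ c.card := by
    refine Finset.sum_nbij' (i := fun d => d.erase x) (j := fun c => insert x c) ?_ ?_ ?_ ?_ ?_
    · intro d hd
      simp only [hC', mem_filter, mem_powerset] at hd ⊢
      obtain ⟨-, ⟨hxd, hcl⟩, hmax⟩ := hd
      refine ⟨subset_univ _, ?_, hcl.subset (by simp [Finset.coe_erase, Set.diff_subset])⟩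
      intro y hy
      simp only [Finset.coe_erase, Set.mem_diff, Finset.mem_coe, Set.mem_singleton_iff] at hy
      obtain ⟨hyd, hyx⟩ := hy
      exact ⟨hcl hxd hyd (fun h => hyx h.symm), hmax y hyd hyx⟩
    · intro c hc
      simp only [hC', mem_filter, mem_powerset] at hc ⊢
      obtain ⟨-, hsub, hcl⟩ := hc
      have hxc : x ∉ c := fun h => hxS (hsub h)
      refine ⟨subset_univ _, ⟨Finset.mem_insert_self _ _, ?_⟩, ?_⟩
      · rw [Finset.coe_insert]
        exact hcl.insert (fun b hb _ => (hsub hb).1)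
      · intro y hy hyx
        have hyc : y ∈ c := by
          rcases Finset.mem_insert.1 hy with h | h
          · exact absurd h hyx
          · exact h
        exact (hsub hyc).2
    · intro d hd
      simp only [mem_filter, mem_powerset] at hd
      exact Finset.insert_erase hd.2.1.1
    · intro c hc
      simp only [hC', mem_filter, mem_powerset] at hc
      exact Finset.erase_insert (fun h => hxS (hc.2.1 h))
    · intro d hd
      simp only [mem_filter, mem_powerset] at hd
      rw [Finset.card_erase_of_mem hd.2.1.1]
      have h1 : 1 ≤ d.card := Finset.card_pos.2 ⟨x, hd.2.1.1⟩
      rw [show d.card + 1 = (d.card - 1) + 2 by omega, pow_add]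
      ring
  rw [key]
  have hemp : (∅ : Finset V) ∈ C' := by
    simp [hC', SimpleGraph.isClique_empty]
  rw [← Finset.add_sum_erase _ _ hemp]
  have hCe : C'.erase ∅ = Finset.univ.powerset.filter
      (fun c : Finset V => c.Nonempty ∧ ↑c ⊆ S ∧ G.IsClique (c : Set V)) := by
    ext c
    simp only [hC', Finset.mem_erase, mem_filter, mem_powerset, Finset.nonempty_iff_ne_empty]
    tauto
  rw [hCe]
  unfold fIndex
  rw [eulerChar_induce]
  simp only [Finset.card_empty, pow_zero]
  have hh : ∑ c ∈ Finset.univ.powerset.filter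
      (fun c : Finset V => c.Nonempty ∧ ↑c ⊆ S ∧ G.IsClique (c : Set V)), (-1 : ℤ) ^ (c.card + 1)
      = -∑ c ∈ Finset.univ.powerset.filter
      (fun c : Finset V => c.Nonempty ∧ ↑c ⊆ S ∧ G.IsClique (c : Set V)), (-1 : ℤ) ^ c.card := by
    rw [← Finset.sum_neg_distrib]
    exact Finset.sum_congr rfl fun c _ => by rw [pow_succ]; ring
  rw [hh]
  ring

lemma count_max {V : Type*} [Fintype V] (c : Finset V) (x : V) (hx : x ∈ c) :
    c.card * (Finset.univ.filter
      (fun σ : V ≃ Fin (Fintype.card V) => ∀ y ∈ c, y ≠ x → σ y < σ x)).card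
      = (Fintype.card V).factorial := by
  classical
  set n := Fintype.card V with hn
  set P : V → (V ≃ Fin n) → Prop := fun y σ => ∀ z ∈ c, z ≠ y → σ z < σ y with hP
  have hex : ∀ σ : V ≃ Fin n, ∃ y ∈ c, P y σ := by
    intro σ
    obtain ⟨y, hy, hmax⟩ := Finset.exists_max_image c (fun z => σ z) ⟨x, hx⟩
    exact ⟨y, hy, fun z hz hzy => lt_of_le_of_ne (hmax z hz) (fun h => hzy (σ.injective h))⟩
  have huniq : ∀ (σ : V ≃ Fin n) (y₁ y₂ : V), y₁ ∈ c → y₂ ∈ c → P y₁ σ → P y₂ σ → y₁ = y₂ := by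
    intro σ y₁ y₂ h1 h2 hp1 hp2
    by_contra hne
    exact absurd (hp1 y₂ h2 (Ne.symm hne)) (not_lt.2 (le_of_lt (hp2 y₁ h1 hne)))
  have hsame : ∀ y ∈ c, (Finset.univ.filter (fun σ : V ≃ Fin n => P y σ)).card
      = (Finset.univ.filter (fun σ : V ≃ Fin n => P x σ)).card := by
    intro y hy
    by_cases hyx : y = x
    · subst hyx; rfl
    refine Finset.card_nbij' (fun σ => (Equiv.swap x y).trans σ)
      (fun σ => (Equiv.swap x y).trans σ) ?_ ?_ ?_ ?_
    · intro σ hσ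
      simp only [Finset.mem_coe, Finset.mem_filter, Finset.mem_univ, true_and, hP,
        Equiv.trans_apply, Equiv.swap_apply_left] at hσ ⊢
      intro z hz hzx
      by_cases hzy : z = y
      · subst hzy
        rw [Equiv.swap_apply_right]
        exact hσ x hx (Ne.symm hyx)
      · rw [Equiv.swap_apply_of_ne_of_ne hzx hzy]
        exact hσ z hz hzy
    · intro σ hσ
      simp only [Finset.mem_coe, Finset.mem_filter, Finset.mem_univ, true_and, hP,
        Equiv.trans_apply, Equiv.swap_apply_right] at hσ ⊢
      intro z hz hzy
      by_cases hzx : z = x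
      · subst hzx
        rw [Equiv.swap_apply_left]
        exact hσ y hy hyx
      · rw [Equiv.swap_apply_of_ne_of_ne hzx hzy]
        exact hσ z hz hzx
    · intro σ hσ
      ext v
      simp [Equiv.swap_apply_self]
    · intro σ hσ
      ext v
      simp [Equiv.swap_apply_self]
  -- partition all bijections by their maximizer on c
  let g : (V ≃ Fin n) → V := fun σ => Classical.choose (hex σ)
  have hg1 : ∀ σ, g σ ∈ c := fun σ => (Classical.choose_spec (hex σ)).1
  have hg2 : ∀ σ, P (g σ) σ := fun σ => (Classical.choose_spec (hex σ)).2
  have hpart : (Finset.univ : Finset (V ≃ Fin n)).card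
      = ∑ y ∈ c, (Finset.univ.filter (fun σ => g σ = y)).card :=
    Finset.card_eq_sum_card_fiberwise (fun σ _ => hg1 σ)
  have hfib : ∀ y ∈ c, Finset.univ.filter (fun σ : V ≃ Fin n => g σ = y)
      = Finset.univ.filter (fun σ => P y σ) := by
    intro y hy
    ext σ
    simp only [Finset.mem_filter, Finset.mem_univ, true_and]
    constructor
    · rintro rfl; exact hg2 σ
    · intro h; exact huniq σ (g σ) y (hg1 σ) hy (hg2 σ) h
  have htot : (Finset.univ : Finset (V ≃ Fin n)).card
      = c.card * (Finset.univ.filter (fun σ : V ≃ Fin n => P x σ)).card := by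
    rw [hpart]
    rw [Finset.sum_congr rfl fun y hy => by rw [hfib y hy, hsame y hy]]
    rw [Finset.sum_const, smul_eq_mul]
  have hcard : (Finset.univ : Finset (V ≃ Fin n)).card = n.factorial := by
    rw [Finset.card_univ, Fintype.card_equiv (Fintype.equivFin V)]
  rw [← hcard, htot]

/-- Curvature is index expectation: averaging the index `i_σ(x)` uniformly over all
`n!` bijections `σ : V → {1, …, n}` (viewed as injective real-valued functions)
yields the curvature `K(x)`. -/
theorem curvature_is_index_expectation {V : Type*} [Fintype V] (G : SimpleGraph V) (x : V) :
    (∑ σ : V ≃ Fin (Fintype.card V), (fIndex G (fun v => ((σ v : ℕ) : ℝ)) x : ℚ)) /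
      (Nat.factorial (Fintype.card V) : ℚ) = curvature G x := by
  classical
  set n := Fintype.card V with hn
  have hfact : (n.factorial : ℚ) ≠ 0 := Nat.cast_ne_zero.2 (Nat.factorial_ne_zero n)
  set B : Finset (Finset V) := Finset.univ.powerset.filter
      (fun d : Finset V => x ∈ d ∧ G.IsClique (d : Set V)) with hB
  have step1 : ∀ σ : V ≃ Fin n, (fIndex G (fun v => ((σ v : ℕ) : ℝ)) x : ℚ)
      = ∑ d ∈ B, (if ∀ y ∈ d, y ≠ x → σ y < σ x then (-1 : ℚ) ^ (d.card + 1) else 0) := by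
    intro σ
    rw [fIndex_eq]
    push_cast
    rw [← Finset.sum_filter, hB, Finset.filter_filter]
    apply Finset.sum_congr _ (fun _ _ => rfl)
    apply Finset.filter_congr
    intro d _
    simp only [Nat.cast_lt, Fin.lt_def]
  have step2 : (∑ σ : V ≃ Fin n, (fIndex G (fun v => ((σ v : ℕ) : ℝ)) x : ℚ))
      = ∑ d ∈ B, ((Finset.univ.filter
          (fun σ : V ≃ Fin n => ∀ y ∈ d, y ≠ x → σ y < σ x)).card : ℚ)
            * (-1 : ℚ) ^ (d.card + 1) := by
    rw [Finset.sum_congr rfl (fun σ _ => step1 σ), Finset.sum_comm]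
    refine Finset.sum_congr rfl fun d _ => ?_
    rw [← Finset.sum_filter, Finset.sum_const, nsmul_eq_mul]
  rw [step2, Finset.sum_div]
  unfold curvature
  refine Finset.sum_congr rfl fun d hd => ?_
  simp only [hB, Finset.mem_filter, Finset.mem_powerset] at hd
  have hcount := count_max d x hd.2.1
  have hd0 : (d.card : ℚ) ≠ 0 := by
    have : 0 < d.card := Finset.card_pos.2 ⟨x, hd.2.1⟩
    exact_mod_cast this.ne'
  rw [div_eq_div_iff hfact hd0]
  have hc : (d.card : ℚ) * ((Finset.univ.filter
      (fun σ : V ≃ Fin n => ∀ y ∈ d, y ≠ x → σ y < σ x)).card : ℚ) = (n.factorial : ℚ) := by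
    exact_mod_cast congrArg (Nat.cast : ℕ → ℚ) hcount
  rw [← hc]
  ring
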